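/- For a convex function f on a simplex S ⊂ ℝ^d with vertices x_0, x_1, …, x_d, the value of f at the barycenter is at most the average of f over S, which is at most the average of the vertex values: f((1/(d+1))·Σ_{i=0}^{d} x_i) ≤ (1/vol(S))·∫_S f(x) dx ≤ (1/(d+1))·Σ_{i=0}^{d} f(x_i). -/

import Mathlib

open MeasureTheory Finset


variable {d : ℕ}

/-- The linear part: sends `B j - B 0` to `B (σ j) - B (σ 0)`. -/
noncomputable def permLin (B : AffineBasis (Fin (d+1)) ℝ (Fin d → ℝ))
    (σ : Equiv.Perm (Fin (d+1))) : (Fin d → ℝ) ≃ₗ[ℝ] (Fin d → ℝ) :=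
  (B.basisOf 0).equiv ((B.reindex σ.symm).basisOf 0) (Equiv.refl _)

/-- The affine equivalence sending `B i` to `B (σ i)`. -/
noncomputable def permAff (B : AffineBasis (Fin (d+1)) ℝ (Fin d → ℝ))
    (σ : Equiv.Perm (Fin (d+1))) : (Fin d → ℝ) ≃ᵃ[ℝ] (Fin d → ℝ) :=
  ((AffineEquiv.constVAdd ℝ (Fin d → ℝ) (-(B 0))).trans
    (permLin B σ).toAffineEquiv).trans
    (AffineEquiv.constVAdd ℝ (Fin d → ℝ) (B (σ 0)))

lemma permAff_apply (B : AffineBasis (Fin (d+1)) ℝ (Fin d → ℝ)) (σ : Equiv.Perm (Fin (d+1)))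
    (p : Fin d → ℝ) :
    permAff B σ p = B (σ 0) + (permLin B σ) (-(B 0) + p) := by
  simp [permAff, AffineEquiv.trans_apply, vadd_eq_add]

lemma permAff_vertex (B : AffineBasis (Fin (d+1)) ℝ (Fin d → ℝ)) (σ : Equiv.Perm (Fin (d+1)))
    (i : Fin (d+1)) : permAff B σ (B i) = B (σ i) := by
  rcases eq_or_ne i 0 with rfl | hi
  · simp [permAff_apply]
  · have h1 : (-(B 0) + B i) = (B.basisOf 0) ⟨i, hi⟩ := by
      rw [B.basisOf_apply]
      simp [vsub_eq_sub]
      abel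
    rw [permAff_apply, h1, permLin, Module.Basis.equiv_apply, Equiv.refl_apply,
      AffineBasis.basisOf_apply]
    simp [vsub_eq_sub, AffineBasis.reindex_apply]

lemma permAff_image (B : AffineBasis (Fin (d+1)) ℝ (Fin d → ℝ)) (σ : Equiv.Perm (Fin (d+1))) :
    (permAff B σ) '' (convexHull ℝ (Set.range ⇑B)) = convexHull ℝ (Set.range ⇑B) := by
  have h1 : ⇑(permAff B σ) ∘ ⇑B = ⇑B ∘ σ := funext fun i => permAff_vertex B σ i
  have h2 : ⇑(permAff B σ) '' (convexHull ℝ (Set.range ⇑B))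
      = (permAff B σ).toAffineMap '' (convexHull ℝ (Set.range ⇑B)) := rfl
  rw [h2, AffineMap.image_convexHull, ← Set.range_comp]
  have : ⇑(permAff B σ).toAffineMap ∘ ⇑B = ⇑B ∘ σ := h1
  rw [this, Set.range_comp, σ.surjective.range_eq, Set.image_univ]

lemma permAff_det (B : AffineBasis (Fin (d+1)) ℝ (Fin d → ℝ)) (σ : Equiv.Perm (Fin (d+1)))
    (h0 : volume (convexHull ℝ (Set.range ⇑B)) ≠ 0)
    (ht : volume (convexHull ℝ (Set.range ⇑B)) ≠ ⊤) :
    ENNReal.ofReal |LinearMap.det ((permLin B σ : (Fin d → ℝ) →ₗ[ℝ] (Fin d → ℝ)))| = 1 := by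
  set S := convexHull ℝ (Set.range ⇑B) with hSdef
  have himg : ⇑(permAff B σ) '' S = S := permAff_image B σ
  have hcomp : ⇑(permAff B σ) = (fun p => B (σ 0) + p) ∘
      (⇑(permLin B σ : (Fin d → ℝ) →ₗ[ℝ] (Fin d → ℝ))) ∘ (fun p => -(B 0) + p) :=
    funext fun p => permAff_apply B σ p
  have h1 : volume ((fun p => B (σ 0) + p) '' ((⇑(permLin B σ : (Fin d → ℝ) →ₗ[ℝ] (Fin d → ℝ))) '' ((fun p => -(B 0) + p) '' S))) = volume S := by
    rw [Set.image_image, Set.image_image,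
      show (fun p => B (σ 0) + (permLin B σ : (Fin d → ℝ) →ₗ[ℝ] (Fin d → ℝ)) (-(B 0) + p)) = ⇑(permAff B σ) from funext fun p => (permAff_apply B σ p).symm, himg]
  rw [Set.image_add_left, measure_preimage_add] at h1
  rw [Measure.addHaar_image_linearMap] at h1
  rw [Set.image_add_left, measure_preimage_add] at h1
  rw [mul_comm] at h1
  exact (ENNReal.mul_eq_left h0 ht).mp h1

lemma permAff_measurePreserving (B : AffineBasis (Fin (d+1)) ℝ (Fin d → ℝ))
    (σ : Equiv.Perm (Fin (d+1)))
    (h0 : volume (convexHull ℝ (Set.range ⇑B)) ≠ 0)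
    (ht : volume (convexHull ℝ (Set.range ⇑B)) ≠ ⊤) :
    MeasurePreserving (permAff B σ) volume volume := by
  have hdet := permAff_det B σ h0 ht
  have hdet1 : |LinearMap.det ((permLin B σ : (Fin d → ℝ) →ₗ[ℝ] (Fin d → ℝ)))| = 1 := by
    rwa [ENNReal.ofReal_eq_one] at hdet
  have hdet0 : LinearMap.det ((permLin B σ : (Fin d → ℝ) →ₗ[ℝ] (Fin d → ℝ))) ≠ 0 := by
    intro h; rw [h] at hdet1; simp at hdet1
  have hLmeas : Measurable (⇑(permLin B σ : (Fin d → ℝ) →ₗ[ℝ] (Fin d → ℝ))) :=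
    (permLin B σ : (Fin d → ℝ) →ₗ[ℝ] (Fin d → ℝ)).continuous_of_finiteDimensional.measurable
  refine ⟨(permAff B σ).continuous_of_finiteDimensional.measurable, ?_⟩
  have hcomp : ⇑(permAff B σ) = (fun p => B (σ 0) + p) ∘
      (⇑(permLin B σ : (Fin d → ℝ) →ₗ[ℝ] (Fin d → ℝ))) ∘ (fun p => -(B 0) + p) :=
    funext fun p => permAff_apply B σ p
  rw [hcomp, ← Function.comp_assoc]
  rw [← Measure.map_map (by fun_prop) (measurable_const_add _),
    ← Measure.map_map (measurable_const_add _) hLmeas]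
  rw [Measure.IsAddLeftInvariant.map_add_left_eq_self (-(B 0)),
    Real.map_linearMap_volume_pi_eq_smul_volume_pi hdet0, abs_inv, hdet1]
  simp [Measure.IsAddLeftInvariant.map_add_left_eq_self]

lemma permAff_preimage (B : AffineBasis (Fin (d+1)) ℝ (Fin d → ℝ)) (σ : Equiv.Perm (Fin (d+1))) :
    (permAff B σ) ⁻¹' (convexHull ℝ (Set.range ⇑B)) = convexHull ℝ (Set.range ⇑B) := by
  conv_lhs => rw [← permAff_image B σ]
  exact Set.preimage_image_eq _ (permAff B σ).injective

lemma permAff_mp_restrict (B : AffineBasis (Fin (d+1)) ℝ (Fin d → ℝ))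
    (σ : Equiv.Perm (Fin (d+1)))
    (h0 : volume (convexHull ℝ (Set.range ⇑B)) ≠ 0)
    (ht : volume (convexHull ℝ (Set.range ⇑B)) ≠ ⊤) :
    MeasurePreserving (permAff B σ) (volume.restrict (convexHull ℝ (Set.range ⇑B)))
      (volume.restrict (convexHull ℝ (Set.range ⇑B))) := by
  have hmeas : MeasurableSet (convexHull ℝ (Set.range ⇑B)) :=
    ((Set.finite_range ⇑B).isCompact_convexHull (𝕜 := ℝ)).isClosed.measurableSet
  have := (permAff_measurePreserving B σ h0 ht).restrict_preimage hmeas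
  rwa [permAff_preimage] at this

lemma permAff_integral (B : AffineBasis (Fin (d+1)) ℝ (Fin d → ℝ))
    (σ : Equiv.Perm (Fin (d+1)))
    (h0 : volume (convexHull ℝ (Set.range ⇑B)) ≠ 0)
    (ht : volume (convexHull ℝ (Set.range ⇑B)) ≠ ⊤) (g : (Fin d → ℝ) → ℝ) :
    ∫ y in convexHull ℝ (Set.range ⇑B), g (permAff B σ y) =
      ∫ y in convexHull ℝ (Set.range ⇑B), g y :=
  (permAff_mp_restrict B σ h0 ht).integral_comp
    (permAff B σ).toHomeomorphOfFiniteDimensional.measurableEmbedding g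

lemma permAff_integrableOn (B : AffineBasis (Fin (d+1)) ℝ (Fin d → ℝ))
    (σ : Equiv.Perm (Fin (d+1)))
    (h0 : volume (convexHull ℝ (Set.range ⇑B)) ≠ 0)
    (ht : volume (convexHull ℝ (Set.range ⇑B)) ≠ ⊤) {g : (Fin d → ℝ) → ℝ}
    (hg : IntegrableOn g (convexHull ℝ (Set.range ⇑B)) volume) :
    IntegrableOn (fun y => g (permAff B σ y)) (convexHull ℝ (Set.range ⇑B)) volume :=
  ((permAff_mp_restrict B σ h0 ht).integrable_comp_emb
    (permAff B σ).toHomeomorphOfFiniteDimensional.measurableEmbedding).mpr hg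

lemma permAff_coord (B : AffineBasis (Fin (d+1)) ℝ (Fin d → ℝ)) (σ : Equiv.Perm (Fin (d+1)))
    (j : Fin (d+1)) (y : Fin d → ℝ) :
    B.coord j (permAff B σ y) = B.coord (σ.symm j) y := by
  set w : Fin (d+1) → ℝ := fun i => B.coord i y with hwdef
  have hw : ∑ i, w i = 1 := B.sum_coord_apply_eq_one y
  have hw' : ∑ i, (w ∘ ⇑σ.symm) i = 1 := by
    rw [← hw]; exact Equiv.sum_comp σ.symm w
  have hy := B.affineCombination_coord_eq_self y
  conv_lhs => rw [← hy]
  rw [show (permAff B σ) (Finset.univ.affineCombination ℝ ⇑B w)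
      = (permAff B σ).toAffineMap (Finset.univ.affineCombination ℝ ⇑B w) from rfl,
    Finset.univ.map_affineCombination ⇑B w hw (permAff B σ).toAffineMap,
    show ⇑(permAff B σ).toAffineMap ∘ ⇑B = ⇑B ∘ ⇑σ from funext fun i => permAff_vertex B σ i]
  have hre := Finset.affineCombination_map (s₂ := (Finset.univ : Finset (Fin (d+1))))
    σ.toEmbedding (w ∘ ⇑σ.symm) ⇑B
  rw [Finset.map_univ_equiv] at hre
  have : (w ∘ ⇑σ.symm) ∘ ⇑σ.toEmbedding = w := by
    funext i; simp
  rw [this] at hre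
  simp only [Equiv.coe_toEmbedding] at hre
  rw [← hre, B.coord_apply_combination_of_mem (Finset.mem_univ j) hw']
  rfl

/-- Hermite–Hadamard inequality on a simplex: for a convex integrable function on a
nondegenerate simplex `S ⊂ ℝ^d` with vertices `x 0, …, x d`, the value at the barycenter
is at most the average of `f` over `S`, which is at most the average of the vertex values. -/
theorem hermite_hadamard_simplex (d : ℕ) (x : Fin (d + 1) → (Fin d → ℝ))
    (hx : AffineIndependent ℝ x)
    (S : Set (Fin d → ℝ)) (hS : S = convexHull ℝ (Set.range x))
    (f : (Fin d → ℝ) → ℝ) (hf : ConvexOn ℝ S f)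
    (hint : IntegrableOn f S volume) :
    f ((1 / ((d : ℝ) + 1)) • ∑ i, x i) ≤ (1 / (volume S).toReal) * ∫ y in S, f y ∧
    (1 / (volume S).toReal) * ∫ y in S, f y ≤ (1 / ((d : ℝ) + 1)) * ∑ i, f (x i) := by
  subst hS
  have hspan : affineSpan ℝ (Set.range x) = ⊤ :=
    hx.affineSpan_eq_top_iff_card_eq_finrank_add_one.mpr (by simp)
  let B : AffineBasis (Fin (d+1)) ℝ (Fin d → ℝ) := ⟨x, hx, hspan⟩
  have hBx : ⇑B = x := rfl
  set S : Set (Fin d → ℝ) := convexHull ℝ (Set.range x) with hSdef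
  have hSB : S = convexHull ℝ (Set.range ⇑B) := by rw [hBx]
  have hcpt : IsCompact S := (Set.finite_range x).isCompact_convexHull (𝕜 := ℝ)
  have hSm : MeasurableSet S := hcpt.isClosed.measurableSet
  have h0 : volume S ≠ 0 :=
    (MeasureTheory.Measure.measure_pos_of_nonempty_interior _
      (interior_convexHull_nonempty_iff_affineSpan_eq_top.mpr hspan)).ne'
  have ht : volume S ≠ ⊤ := hcpt.measure_lt_top.ne
  have h0' : volume (convexHull ℝ (Set.range ⇑B)) ≠ 0 := hSB ▸ h0
  have ht' : volume (convexHull ℝ (Set.range ⇑B)) ≠ ⊤ := hSB ▸ ht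
  have hvolpos : 0 < (volume S).toReal := ENNReal.toReal_pos h0 ht
  have hd1 : (0:ℝ) < (d:ℝ) + 1 := by positivity
  -- coordinates are nonnegative on S
  have hcoord_nonneg : ∀ i, ∀ y ∈ S, 0 ≤ B.coord i y := by
    intro i
    have hsub : Set.range x ⊆ (B.coord i) ⁻¹' (Set.Ici 0) := by
      rintro _ ⟨k, rfl⟩
      have : B.coord i (B k) = if i = k then 1 else 0 := B.coord_apply i k
      rw [← hBx]
      simp only [Set.mem_preimage, Set.mem_Ici, this]
      split <;> norm_num
    intro y hy
    exact convexHull_min hsub ((convex_Ici (0:ℝ)).affine_preimage (B.coord i)) hy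
  -- coordinates are integrable on S
  have hIc : ∀ i, IntegrableOn (fun y => B.coord i y) S volume := fun i =>
    ((B.coord i).continuous_of_finiteDimensional).continuousOn.integrableOn_compact hcpt
  -- all coordinate integrals are equal
  set I : Fin (d+1) → ℝ := fun i => ∫ y in S, B.coord i y with hIdef
  have hI0 : ∀ i, I i = I 0 := by
    intro i
    rcases eq_or_ne i 0 with rfl | hi
    · rfl
    have h2 : ∀ y, B.coord i (permAff B (Equiv.swap 0 i) y) = B.coord 0 y := by
      intro y
      rw [permAff_coord]
      congr 1
      simp [Equiv.symm_swap, Equiv.swap_apply_right]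
    have h3 := permAff_integral B (Equiv.swap 0 i) h0' ht' (fun y => B.coord i y)
    simp only [h2] at h3
    rw [← hSB] at h3
    exact h3.symm
  have hsumI : ∑ i, I i = (volume S).toReal := by
    rw [hIdef, ← integral_finset_sum univ (fun i _ => hIc i)]
    simp only [B.sum_coord_apply_eq_one]
    rw [setIntegral_const, smul_eq_mul, mul_one]; rfl
  have hIval : ∀ i, I i = (volume S).toReal / ((d:ℝ)+1) := by
    intro i
    have : ∑ j, I j = ((d:ℝ)+1) * I 0 := by
      rw [Finset.sum_congr rfl (fun j _ => hI0 j)]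
      simp [Finset.sum_const, card_univ, mul_comm]
    rw [hI0 i]
    rw [this] at hsumI
    rw [eq_div_iff hd1.ne']
    linarith [hsumI]
  -- RIGHT INEQUALITY
  have hpt : ∀ y ∈ S, f y ≤ ∑ i, B.coord i y * f (x i) := by
    intro y hy
    have hyc : ∑ i, B.coord i y • B i = y := B.linear_combination_coord_eq_self y
    have hmem : ∀ i ∈ univ, x i ∈ S := fun i _ =>
      subset_convexHull ℝ _ (Set.mem_range_self i)
    have := hf.map_sum_le (fun i _ => hcoord_nonneg i y hy)
      (B.sum_coord_apply_eq_one y) hmem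
    rw [show ∑ i, B.coord i y • x i = y from hyc] at this
    exact this
  have hIsum : IntegrableOn (fun y => ∑ i, B.coord i y * f (x i)) S volume :=
    integrable_finset_sum univ fun i _ => (hIc i).mul_const _
  have hright : ∫ y in S, f y ≤ (volume S).toReal * ((1/((d:ℝ)+1)) * ∑ i, f (x i)) := by
    have h1 : ∫ y in S, f y ≤ ∫ y in S, ∑ i, B.coord i y * f (x i) :=
      setIntegral_mono_on hint hIsum hSm hpt
    have h2 : ∫ y in S, ∑ i, B.coord i y * f (x i) = ∑ i, I i * f (x i) := by
      rw [integral_finset_sum univ (fun i _ => (hIc i).mul_const _)]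
      exact Finset.sum_congr rfl fun i _ => integral_mul_const _ _
    have h3 : ∑ i, I i * f (x i) = (volume S).toReal * ((1/((d:ℝ)+1)) * ∑ i, f (x i)) := by
      rw [Finset.mul_sum, Finset.mul_sum]
      refine Finset.sum_congr rfl fun i _ => ?_
      rw [hIval i]; ring
    linarith [h1, h2 ▸ h1]
  -- LEFT INEQUALITY
  have hmemS : ∀ σ y, y ∈ S → permAff B σ y ∈ S := by
    intro σ y hy
    have : permAff B σ y ∈ ⇑(permAff B σ) '' (convexHull ℝ (Set.range ⇑B)) :=
      Set.mem_image_of_mem _ (hSB ▸ hy)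
    rw [permAff_image B σ, ← hSB] at this
    exact this
  set c : Fin d → ℝ := (1 / ((d : ℝ) + 1)) • ∑ i, x i with hcdef
  have hbary : ∀ y ∈ S, c = ∑ k : Fin (d+1), (1/((d:ℝ)+1)) • permAff B (Equiv.addLeft k) y := by
    intro y hy
    set w : Fin (d+1) → ℝ := fun i => B.coord i y with hwdef
    have hw : ∑ i, w i = 1 := B.sum_coord_apply_eq_one y
    have hyc : y = Finset.univ.affineCombination ℝ ⇑B w :=
      (B.affineCombination_coord_eq_self y).symm
    have hpk : ∀ k : Fin (d+1), permAff B (Equiv.addLeft k) y = ∑ j, w j • x (k + j) := by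
      intro k
      conv_lhs => rw [hyc]
      rw [show (permAff B (Equiv.addLeft k)) (Finset.univ.affineCombination ℝ ⇑B w)
          = (permAff B (Equiv.addLeft k)).toAffineMap (Finset.univ.affineCombination ℝ ⇑B w)
          from rfl,
        Finset.univ.map_affineCombination ⇑B w hw (permAff B (Equiv.addLeft k)).toAffineMap,
        show ⇑(permAff B (Equiv.addLeft k)).toAffineMap ∘ ⇑B = ⇑B ∘ ⇑(Equiv.addLeft k)
          from funext fun i => permAff_vertex B (Equiv.addLeft k) i,
        Finset.univ.affineCombination_eq_linear_combination _ _ hw]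
      simp [hBx, Equiv.addLeft]
    have hsum : ∑ k : Fin (d+1), permAff B (Equiv.addLeft k) y = ∑ i, x i := by
      rw [Finset.sum_congr rfl fun k _ => hpk k, Finset.sum_comm]
      have : ∀ j, ∑ k : Fin (d+1), w j • x (k + j) = w j • ∑ i, x i := by
        intro j
        rw [← Finset.smul_sum]
        congr 1
        exact Equiv.sum_comp (Equiv.addRight j) x
      rw [Finset.sum_congr rfl fun j _ => this j, ← Finset.sum_smul, hw, one_smul]
    rw [← Finset.smul_sum, hsum]
  have hptL : ∀ y ∈ S, f c ≤ ∑ k : Fin (d+1), (1/((d:ℝ)+1)) * f (permAff B (Equiv.addLeft k) y) := by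
    intro y hy
    rw [hbary y hy]
    refine hf.map_sum_le (fun k _ => by positivity) ?_ (fun k _ => hmemS _ y hy)
    rw [Finset.sum_const, card_univ]
    simp
    field_simp
  have hleft : (volume S).toReal * f c ≤ ∫ y in S, f y := by
    have hintc : ∀ k : Fin (d+1),
        IntegrableOn (fun y => f (permAff B (Equiv.addLeft k) y)) S volume := by
      intro k
      have := permAff_integrableOn B (Equiv.addLeft k) h0' ht' (hSB ▸ hint)
      rwa [← hSB] at this
    have h1 : ∫ y in S, f c = (volume S).toReal * f c := by
      rw [setIntegral_const, smul_eq_mul]; rfl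
    have h2 : (∫ y in S, f c) ≤
        ∫ y in S, ∑ k : Fin (d+1), (1/((d:ℝ)+1)) * f (permAff B (Equiv.addLeft k) y) := by
      refine setIntegral_mono_on ((integrableOn_const_iff).mpr (Or.inr ht.lt_top))
        (integrable_finset_sum univ fun k _ => ((hintc k).const_mul _)) hSm hptL
    have h3 : ∫ y in S, ∑ k : Fin (d+1), (1/((d:ℝ)+1)) * f (permAff B (Equiv.addLeft k) y)
        = ∫ y in S, f y := by
      rw [integral_finset_sum univ fun k _ => ((hintc k).const_mul _)]
      have : ∀ k : Fin (d+1), ∫ y in S, (1/((d:ℝ)+1)) * f (permAff B (Equiv.addLeft k) y)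
          = (1/((d:ℝ)+1)) * ∫ y in S, f y := by
        intro k
        rw [integral_const_mul]
        congr 1
        have := permAff_integral B (Equiv.addLeft k) h0' ht' f
        rwa [← hSB] at this
      rw [Finset.sum_congr rfl fun k _ => this k, Finset.sum_const, card_univ]
      simp
      field_simp
    rw [← h1]
    rw [← h3]
    exact h2
  constructor
  · calc f c = (1/(volume S).toReal) * ((volume S).toReal * f c) := by field_simp
    _ ≤ (1/(volume S).toReal) * ∫ y in S, f y := by
        apply mul_le_mul_of_nonneg_left hleft (by positivity)
  · calc (1/(volume S).toReal) * ∫ y in S, f y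
        ≤ (1/(volume S).toReal) * ((volume S).toReal * ((1/((d:ℝ)+1)) * ∑ i, f (x i))) :=
          mul_le_mul_of_nonneg_left hright (by positivity)
    _ = (1/((d:ℝ)+1)) * ∑ i, f (x i) := by field_simp
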